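/- Let ε > 0 and let f be a continuous function from the closed unit ball B of S₂^d to S₂^d satisfying |⟨f(x),f(y)⟩ − ⟨x,y⟩| ≤ ε for all x, y ∈ B. Define F : S₂^d → S₂^d by F(0) := 0 and F(x) := ‖x‖₂·( f(x/(2‖x‖₂)) − f(−x/(2‖x‖₂)) ) for x ≠ 0. Then: (1) F is continuous; (2) F(λx) = λF(x) for all λ ∈ ℝ and x ∈ S₂^d; (3) for every finite sequence x₁,…,x_n ∈ S₂^d: ‖Σⱼ F(xⱼ) − F(Σⱼ xⱼ)‖₂ ≤ 4√ε·Σⱼ ‖xⱼ‖₂; and (4) ‖f(x) − F(x)‖₂ ≤ 3√ε for all x ∈ B. -/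

import Mathlib

open Finset Matrix

/-- The real vector space of `d × d` complex Hermitian matrices. -/
noncomputable abbrev HermMat (d : ℕ) := selfAdjoint (Matrix (Fin d) (Fin d) ℂ)

/-- The Hilbert–Schmidt inner product `⟨x, y⟩ = Tr (x y)` on Hermitian matrices. -/
noncomputable def hsInner {d : ℕ} (x y : HermMat d) : ℝ :=
  (((x : Matrix (Fin d) (Fin d) ℂ) * (y : Matrix (Fin d) (Fin d) ℂ)).trace).re

/-- The Hilbert–Schmidt norm `‖x‖₂ = (Tr x²)^{1/2}` on Hermitian matrices. -/
noncomputable def hsNorm {d : ℕ} (x : HermMat d) : ℝ :=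
  Real.sqrt (hsInner x x)

/-- The set of rank-one orthogonal projections in `ℂ^{d×d}`, viewed inside the
Hermitian matrices. -/
def rankOneProjSet (d : ℕ) : Set (HermMat d) :=
  { p | ∃ v : EuclideanSpace ℂ (Fin d), ‖v‖ = 1 ∧
    (p : Matrix (Fin d) (Fin d) ℂ) = Matrix.of fun i j => v i * star (v j) }

namespace HSaux
variable {d : ℕ}

instance (d : ℕ) : ContinuousSMul ℝ (HermMat d) := by
  constructor
  apply continuous_induced_rng.2
  exact continuous_fst.smul (continuous_subtype_val.comp continuous_snd)

noncomputable def toV {d : ℕ} : HermMat d →ₗ[ℝ] EuclideanSpace ℂ (Fin d × Fin d) where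
  toFun x := (WithLp.equiv 2 _).symm fun p => (x : Matrix (Fin d) (Fin d) ℂ) p.1 p.2
  map_add' x y := by ext p; simp
  map_smul' r x := by ext p; simp

lemma toV_apply (x : HermMat d) (p : Fin d × Fin d) :
    toV x p = (x : Matrix (Fin d) (Fin d) ℂ) p.1 p.2 := rfl

lemma conj_entry (x : HermMat d) (i j : Fin d) :
    (starRingEnd ℂ) ((x : Matrix (Fin d) (Fin d) ℂ) i j) = (x : Matrix (Fin d) (Fin d) ℂ) j i := by
  have h : star (x : Matrix (Fin d) (Fin d) ℂ) = (x : Matrix (Fin d) (Fin d) ℂ) :=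
    selfAdjoint.mem_iff.mp x.2
  conv_rhs => rw [← h]
  rfl

lemma hsInner_eq (x y : HermMat d) :
    hsInner x y = (inner ℂ (toV x) (toV y) : ℂ).re := by
  rw [PiLp.inner_apply]
  simp only [RCLike.inner_apply', toV_apply, conj_entry]
  rw [hsInner, Matrix.trace, Fintype.sum_prod_type]
  simp only [Matrix.diag, Matrix.mul_apply]
  simp only [Complex.re_sum]
  rw [Finset.sum_comm]

lemma toV_inj : Function.Injective (toV (d := d)) := by
  intro x y h
  refine Subtype.ext (Matrix.ext fun i j => ?_)
  exact congrArg (fun v => v (i, j)) h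

lemma hsInner_comm (x y : HermMat d) : hsInner x y = hsInner y x := by
  rw [hsInner_eq, hsInner_eq, ← inner_conj_symm (toV x), Complex.conj_re]

lemma hsInner_sub_left (x y z : HermMat d) :
    hsInner (x - y) z = hsInner x z - hsInner y z := by
  simp only [hsInner_eq, map_sub, inner_sub_left, Complex.sub_re]

lemma hsInner_sub_right (x y z : HermMat d) :
    hsInner x (y - z) = hsInner x y - hsInner x z := by
  simp only [hsInner_eq, map_sub, inner_sub_right, Complex.sub_re]

lemma hsInner_smul_left (c : ℝ) (x y : HermMat d) :
    hsInner (c • x) y = c * hsInner x y := by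
  simp only [hsInner_eq, _root_.map_smul]
  rw [RCLike.real_smul_eq_coe_smul (K := ℂ), inner_smul_left, RCLike.conj_ofReal]
  simp [Complex.ofReal_re]

lemma hsInner_smul_right (c : ℝ) (x y : HermMat d) :
    hsInner x (c • y) = c * hsInner x y := by
  rw [hsInner_comm, hsInner_smul_left, hsInner_comm]

lemma hsInner_neg_left (x y : HermMat d) : hsInner (-x) y = -hsInner x y := by
  simp only [hsInner_eq, map_neg, inner_neg_left, Complex.neg_re]

lemma hsInner_neg_right (x y : HermMat d) : hsInner x (-y) = -hsInner x y := by
  rw [hsInner_comm, hsInner_neg_left, hsInner_comm]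

lemma hsInner_zero_left (y : HermMat d) : hsInner 0 y = 0 := by
  simp only [hsInner_eq, map_zero, inner_zero_left, Complex.zero_re]

lemma hsInner_zero_right (y : HermMat d) : hsInner y 0 = 0 := by
  rw [hsInner_comm, hsInner_zero_left]

lemma hsInner_sum_left {n : ℕ} (x : Fin n → HermMat d) (y : HermMat d) :
    hsInner (∑ j, x j) y = ∑ j, hsInner (x j) y := by
  simp only [hsInner_eq, map_sum, sum_inner, Complex.re_sum]

lemma hsInner_sum_right {n : ℕ} (x : Fin n → HermMat d) (y : HermMat d) :
    hsInner y (∑ j, x j) = ∑ j, hsInner y (x j) := by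
  simp only [hsInner_eq, map_sum, inner_sum, Complex.re_sum]

lemma hsNorm_toV (x : HermMat d) : hsNorm x = ‖toV x‖ := by
  rw [hsNorm, hsInner_eq]
  have h := @inner_self_eq_norm_sq ℂ _ _ _ _ (toV x)
  rw [RCLike.re_to_complex] at h
  rw [h, Real.sqrt_sq (norm_nonneg _)]

lemma hsNorm_nonneg (x : HermMat d) : 0 ≤ hsNorm x := Real.sqrt_nonneg _

lemma hsNorm_le_sqrt {x : HermMat d} {a : ℝ} (h : hsInner x x ≤ a) :
    hsNorm x ≤ Real.sqrt a := Real.sqrt_le_sqrt h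

lemma hsInner_self (x : HermMat d) : hsInner x x = hsNorm x ^ 2 := by
  rw [hsNorm_toV, hsInner_eq]
  have h := @inner_self_eq_norm_sq ℂ _ _ _ _ (toV x)
  rw [RCLike.re_to_complex] at h
  exact h

lemma hsNorm_smul (c : ℝ) (x : HermMat d) : hsNorm (c • x) = |c| * hsNorm x := by
  simp only [hsNorm_toV, _root_.map_smul, norm_smul, Real.norm_eq_abs]

lemma hsNorm_neg (x : HermMat d) : hsNorm (-x) = hsNorm x := by
  simp only [hsNorm_toV, map_neg, norm_neg]

lemma hsNorm_pos {x : HermMat d} (hx : x ≠ 0) : 0 < hsNorm x := by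
  rw [hsNorm_toV, norm_pos_iff]
  intro h
  exact hx (toV_inj (by rw [h, map_zero]))

lemma hsNorm_zero : hsNorm (0 : HermMat d) = 0 := by
  simp [hsNorm_toV]

lemma ne_zero_of_hsNorm_pos {x : HermMat d} (h : 0 < hsNorm x) : x ≠ 0 := by
  intro hx
  rw [hx, hsNorm_zero] at h
  exact lt_irrefl 0 h

lemma hsNorm_sum_le {n : ℕ} (x : Fin n → HermMat d) :
    hsNorm (∑ j, x j) ≤ ∑ j, hsNorm (x j) := by
  simp only [hsNorm_toV, map_sum]
  exact norm_sum_le _ _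

lemma toV_continuous : Continuous (toV (d := d)) := by
  apply (PiLp.continuous_toLp 2 (fun _ : Fin d × Fin d => ℂ)).comp
  exact continuous_pi fun p => continuous_subtype_val.matrix_elem p.1 p.2

lemma hsNorm_continuous : Continuous (hsNorm (d := d)) := by
  simpa only [← hsNorm_toV] using toV_continuous.norm

lemma toV_embedding : Topology.IsEmbedding (toV (d := d)) := by
  have : FiniteDimensional ℝ (HermMat d) := FiniteDimensional.of_injective toV toV_inj
  exact (LinearMap.isClosedEmbedding_of_injective
    (LinearMap.ker_eq_bot.mpr (toV_inj (d := d)))).toIsEmbedding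

end HSaux

open HSaux in
set_option maxHeartbeats 1000000 in
theorem stmt11 (d : ℕ) (ε : ℝ) (hε : 0 < ε)
    (f : HermMat d → HermMat d)
    (hcont : ContinuousOn f { x : HermMat d | hsNorm x ≤ 1 })
    (hsym : ∀ x ∈ { x : HermMat d | hsNorm x ≤ 1 }, ∀ y ∈ { x : HermMat d | hsNorm x ≤ 1 },
      |hsInner (f x) (f y) - hsInner x y| ≤ ε)
    (F : HermMat d → HermMat d)
    (hF0 : F 0 = 0)
    (hFdef : ∀ x : HermMat d, x ≠ 0 →
      F x = hsNorm x • (f ((2 * hsNorm x)⁻¹ • x) - f (-((2 * hsNorm x)⁻¹ • x)))) :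
    Continuous F ∧
    (∀ (c : ℝ) (x : HermMat d), F (c • x) = c • F x) ∧
    (∀ (n : ℕ) (x : Fin n → HermMat d),
      hsNorm ((∑ j, F (x j)) - F (∑ j, x j)) ≤ 4 * Real.sqrt ε * ∑ j, hsNorm (x j)) ∧
    (∀ x ∈ { x : HermMat d | hsNorm x ≤ 1 }, hsNorm (f x - F x) ≤ 3 * Real.sqrt ε) := by
  -- membership facts
  have hu_norm : ∀ x : HermMat d, x ≠ 0 → hsNorm ((2 * hsNorm x)⁻¹ • x) = 1/2 := by
    intro x hx
    have hp := hsNorm_pos hx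
    rw [hsNorm_smul, abs_of_nonneg (by positivity)]
    field_simp
  have hu_mem : ∀ x : HermMat d, x ≠ 0 → ((2 * hsNorm x)⁻¹ • x) ∈ { x : HermMat d | hsNorm x ≤ 1 } := by
    intro x hx
    show hsNorm _ ≤ 1
    rw [hu_norm x hx]; norm_num
  have hnu_mem : ∀ x : HermMat d, x ≠ 0 → (-((2 * hsNorm x)⁻¹ • x)) ∈ { x : HermMat d | hsNorm x ≤ 1 } := by
    intro x hx
    show hsNorm _ ≤ 1
    rw [hsNorm_neg, hu_norm x hx]; norm_num
  -- key estimate: F nearly preserves inner products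
  have KFF : ∀ x y : HermMat d,
      |hsInner (F x) (F y) - hsInner x y| ≤ 4 * ε * (hsNorm x * hsNorm y) := by
    intro x y
    by_cases hx : x = 0
    · simp [hx, hF0, hsInner_zero_left, hsNorm_zero]
    by_cases hy : y = 0
    · simp [hy, hF0, hsInner_zero_right, hsNorm_zero]
    have hnx := hsNorm_pos hx
    have hny := hsNorm_pos hy
    set u : HermMat d := (2 * hsNorm x)⁻¹ • x with hu
    set v : HermMat d := (2 * hsNorm y)⁻¹ • y with hv
    have e1 := hsym u (hu_mem x hx) v (hu_mem y hy)
    have e2 := hsym u (hu_mem x hx) (-v) (hnu_mem y hy)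
    have e3 := hsym (-u) (hnu_mem x hx) v (hu_mem y hy)
    have e4 := hsym (-u) (hnu_mem x hx) (-v) (hnu_mem y hy)
    simp only [hsInner_neg_left, hsInner_neg_right, neg_neg] at e2 e3 e4
    have hexp : hsInner (F x) (F y)
        = hsNorm x * hsNorm y * (hsInner (f u) (f v) - hsInner (f u) (f (-v))
          - hsInner (f (-u)) (f v) + hsInner (f (-u)) (f (-v))) := by
      rw [hFdef x hx, hFdef y hy, ← hu, ← hv, hsInner_smul_left, hsInner_smul_right,
        hsInner_sub_left, hsInner_sub_right, hsInner_sub_right]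
      ring
    have hxy : hsInner x y = (2 * hsNorm x) * (2 * hsNorm y) * hsInner u v := by
      have hx2 : (2 * hsNorm x) • u = x := by
        rw [hu, smul_smul, mul_inv_cancel₀ (by positivity), one_smul]
      have hy2 : (2 * hsNorm y) • v = y := by
        rw [hv, smul_smul, mul_inv_cancel₀ (by positivity), one_smul]
      conv_lhs => rw [← hx2, ← hy2]
      rw [hsInner_smul_left, hsInner_smul_right]
      ring
    rw [hexp, hxy]
    rw [abs_le] at e1 e2 e3 e4
    have hpos : (0:ℝ) < hsNorm x * hsNorm y := mul_pos hnx hny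
    have key : |hsInner (f u) (f v) - hsInner (f u) (f (-v))
          - hsInner (f (-u)) (f v) + hsInner (f (-u)) (f (-v)) - 4 * hsInner u v| ≤ 4 * ε := by
      rw [abs_le]
      constructor <;> [linarith [e1.1, e2.2, e3.2, e4.1]; linarith [e1.2, e2.1, e3.1, e4.2]]
    rw [show (hsNorm x * hsNorm y * (hsInner (f u) (f v) - hsInner (f u) (f (-v))
          - hsInner (f (-u)) (f v) + hsInner (f (-u)) (f (-v)))
          - 2 * hsNorm x * (2 * hsNorm y) * hsInner u v)
        = hsNorm x * hsNorm y * (hsInner (f u) (f v) - hsInner (f u) (f (-v))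
          - hsInner (f (-u)) (f v) + hsInner (f (-u)) (f (-v)) - 4 * hsInner u v) from by ring,
      abs_mul, abs_of_pos hpos]
    have hmul := mul_le_mul_of_nonneg_left key hpos.le
    linarith
  -- second estimate: pairing F with f
  have KFf : ∀ x : HermMat d, ∀ w ∈ { x : HermMat d | hsNorm x ≤ 1 },
      |hsInner (F x) (f w) - hsInner x w| ≤ 2 * ε * hsNorm x := by
    intro x w hw
    by_cases hx : x = 0
    · simp [hx, hF0, hsInner_zero_left, hsNorm_zero]
    have hnx := hsNorm_pos hx
    set u : HermMat d := (2 * hsNorm x)⁻¹ • x with hu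
    have e1 := hsym u (hu_mem x hx) w hw
    have e2 := hsym (-u) (hnu_mem x hx) w hw
    simp only [hsInner_neg_left, hsInner_neg_right, neg_neg] at e2
    have hexp : hsInner (F x) (f w)
        = hsNorm x * (hsInner (f u) (f w) - hsInner (f (-u)) (f w)) := by
      rw [hFdef x hx, ← hu, hsInner_smul_left, hsInner_sub_left]
    have hxw : hsInner x w = (2 * hsNorm x) * hsInner u w := by
      have hx2 : (2 * hsNorm x) • u = x := by
        rw [hu, smul_smul, mul_inv_cancel₀ (by positivity), one_smul]
      conv_lhs => rw [← hx2]
      rw [hsInner_smul_left]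
    rw [hexp, hxw]
    rw [abs_le] at e1 e2
    have key : |hsInner (f u) (f w) - hsInner (f (-u)) (f w) - 2 * hsInner u w| ≤ 2 * ε := by
      rw [abs_le]
      constructor <;> [linarith [e1.1, e2.2]; linarith [e1.2, e2.1]]
    rw [show (hsNorm x * (hsInner (f u) (f w) - hsInner (f (-u)) (f w))
          - 2 * hsNorm x * hsInner u w)
        = hsNorm x * (hsInner (f u) (f w) - hsInner (f (-u)) (f w) - 2 * hsInner u w)
        from by ring, abs_mul, abs_of_pos hnx]
    have hmul := mul_le_mul_of_nonneg_left key hnx.le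
    linarith
  -- norm growth bound
  have hFnorm : ∀ x : HermMat d, hsNorm (F x) ≤ Real.sqrt (1 + 4 * ε) * hsNorm x := by
    intro x
    have h := abs_le.1 (KFF x x)
    have h1 : hsInner (F x) (F x) ≤ hsInner x x + 4 * ε * (hsNorm x * hsNorm x) := by
      linarith [h.2]
    rw [hsInner_self, hsInner_self] at h1
    have h2 : hsNorm (F x) ^ 2 ≤ (Real.sqrt (1 + 4 * ε) * hsNorm x) ^ 2 := by
      rw [mul_pow, Real.sq_sqrt (by positivity)]
      nlinarith [hsNorm_nonneg x]
    have h3 := Real.sqrt_le_sqrt h2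
    rwa [Real.sqrt_sq (hsNorm_nonneg _), Real.sqrt_sq (mul_nonneg (Real.sqrt_nonneg _) (hsNorm_nonneg _))] at h3
  -- (1) continuity
  have hcontF : Continuous F := by
    rw [continuous_iff_continuousAt]
    intro a
    by_cases ha : a = 0
    · subst ha
      have hembe := toV_embedding (d := d)
      unfold ContinuousAt
      rw [hF0, hembe.tendsto_nhds_iff, map_zero]
      have hbound : ∀ x : HermMat d,
          ‖(⇑toV ∘ F) x‖ ≤ Real.sqrt (1 + 4 * ε) * hsNorm x := by
        intro x
        simpa only [Function.comp, ← hsNorm_toV] using hFnorm x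
      have htend : Filter.Tendsto (fun x : HermMat d => Real.sqrt (1 + 4 * ε) * hsNorm x)
          (nhds 0) (nhds 0) := by
        have hc : Continuous fun x : HermMat d => Real.sqrt (1 + 4 * ε) * hsNorm x :=
          continuous_const.mul hsNorm_continuous
        have := hc.tendsto 0
        simpa [hsNorm_zero] using this
      exact squeeze_zero_norm hbound htend
    · have hopen : IsOpen {x : HermMat d | x ≠ 0} := isOpen_ne
      have hu : ContinuousOn (fun x : HermMat d => (2 * hsNorm x)⁻¹ • x) {x | x ≠ 0} := by
        apply ContinuousOn.smul (f := fun x : HermMat d => (2 * hsNorm x)⁻¹) (g := fun x => x)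
        · apply ContinuousOn.inv₀
          · exact (continuous_const.mul hsNorm_continuous).continuousOn
          · intro x hx
            have := hsNorm_pos hx
            positivity
        · exact continuousOn_id
      have hfu : ContinuousOn (fun x : HermMat d => f ((2 * hsNorm x)⁻¹ • x)) {x | x ≠ 0} :=
        hcont.comp hu (fun x hx => hu_mem x hx)
      have hfnu : ContinuousOn (fun x : HermMat d => f (-((2 * hsNorm x)⁻¹ • x))) {x | x ≠ 0} :=
        hcont.comp hu.neg (fun x hx => hnu_mem x hx)
      have hG : ContinuousOn
          (fun x : HermMat d => hsNorm x •
            (f ((2 * hsNorm x)⁻¹ • x) - f (-((2 * hsNorm x)⁻¹ • x)))) {x | x ≠ 0} :=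
        (hsNorm_continuous.continuousOn).smul (hfu.sub hfnu)
      have hGa := hG.continuousAt (hopen.mem_nhds ha)
      apply hGa.congr
      exact Filter.eventuallyEq_of_mem (hopen.mem_nhds ha) (fun x hx => (hFdef x hx).symm)
  refine ⟨hcontF, ?_, ?_, ?_⟩
  · -- (2) homogeneity
    intro c x
    by_cases hx : x = 0
    · simp [hx, hF0]
    rcases lt_trichotomy c 0 with hc | hc | hc
    · have hnx := hsNorm_pos hx
      have hc0 : c ≠ 0 := ne_of_lt hc
      have hn0 : hsNorm x ≠ 0 := ne_of_gt hnx
      have hcx : c • x ≠ 0 := ne_zero_of_hsNorm_pos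
        (by rw [hsNorm_smul]; exact mul_pos (abs_pos.mpr hc0) hnx)
      rw [hFdef _ hcx, hFdef x hx]
      have hn : hsNorm (c • x) = -c * hsNorm x := by rw [hsNorm_smul, abs_of_neg hc]
      have harg : (2 * hsNorm (c • x))⁻¹ • (c • x) = -((2 * hsNorm x)⁻¹ • x) := by
        rw [hn, smul_smul, ← neg_smul]
        congr 1
        field_simp
      rw [harg, hn, neg_neg]
      rw [show (-c * hsNorm x) = -(c * hsNorm x) by ring, neg_smul, ← smul_neg, neg_sub,
        mul_smul]
    · simp [hc, hF0]
    · have hnx := hsNorm_pos hx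
      have hc0 : c ≠ 0 := ne_of_gt hc
      have hn0 : hsNorm x ≠ 0 := ne_of_gt hnx
      have hcx : c • x ≠ 0 := ne_zero_of_hsNorm_pos
        (by rw [hsNorm_smul]; exact mul_pos (abs_pos.mpr hc0) hnx)
      rw [hFdef _ hcx, hFdef x hx]
      have hn : hsNorm (c • x) = c * hsNorm x := by rw [hsNorm_smul, abs_of_pos hc]
      have harg : (2 * hsNorm (c • x))⁻¹ • (c • x) = (2 * hsNorm x)⁻¹ • x := by
        rw [hn, smul_smul]
        congr 1
        field_simp
      rw [harg, hn, mul_smul]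
  · -- (3) approximate additivity
    intro n x
    set s : HermMat d := ∑ j, x j with hs
    set T : ℝ := ∑ j, hsNorm (x j) with hT
    have hT0 : (0:ℝ) ≤ T := Finset.sum_nonneg fun j _ => hsNorm_nonneg _
    have hsT : hsNorm s ≤ T := hsNorm_sum_le x
    have hns0 : (0:ℝ) ≤ hsNorm s := hsNorm_nonneg s
    set w : HermMat d := (∑ j, F (x j)) - F s with hw
    have hcross : ∑ k, hsInner (F s) (F (x k)) = ∑ k, hsInner (F (x k)) (F s) :=
      Finset.sum_congr rfl fun k _ => hsInner_comm _ _
    have hww : hsInner w w = (∑ j, ∑ k, hsInner (F (x j)) (F (x k)))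
        - 2 * (∑ j, hsInner (F (x j)) (F s)) + hsInner (F s) (F s) := by
      rw [hw, hsInner_sub_left, hsInner_sub_right, hsInner_sub_right]
      simp only [hsInner_sum_left, hsInner_sum_right]
      rw [hcross]
      conv_lhs => rw [Finset.sum_comm]
      ring
    have hb1 : (∑ j, ∑ k, hsInner (F (x j)) (F (x k))) ≤ hsInner s s + 4 * ε * T ^ 2 := by
      have hstep : ∀ j ∈ univ, ∀ k ∈ (univ : Finset (Fin n)),
          hsInner (F (x j)) (F (x k)) ≤ hsInner (x j) (x k)
            + 4 * ε * (hsNorm (x j) * hsNorm (x k)) := by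
        intro j _ k _
        linarith [(abs_le.1 (KFF (x j) (x k))).2]
      calc (∑ j, ∑ k, hsInner (F (x j)) (F (x k)))
          ≤ ∑ j, ∑ k, (hsInner (x j) (x k) + 4 * ε * (hsNorm (x j) * hsNorm (x k))) :=
            Finset.sum_le_sum fun j hj => Finset.sum_le_sum (hstep j hj)
        _ = hsInner s s + 4 * ε * T ^ 2 := by
            simp only [Finset.sum_add_distrib]
            have e1 : ∑ j, ∑ k, hsInner (x j) (x k) = hsInner s s := by
              rw [hs, hsInner_sum_left]
              exact Finset.sum_congr rfl fun j _ => (hsInner_sum_right x (x j)).symm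
            have e2 : ∑ j, ∑ k, 4 * ε * (hsNorm (x j) * hsNorm (x k)) = 4 * ε * T ^ 2 := by
              simp only [← Finset.mul_sum, ← Finset.sum_mul]
              rw [hT]
              ring
            rw [e1, e2]
    have hb2 : hsInner s s - 4 * ε * (T * hsNorm s) ≤ ∑ j, hsInner (F (x j)) (F s) := by
      have hstep : ∀ j ∈ (univ : Finset (Fin n)),
          hsInner (x j) s - 4 * ε * (hsNorm (x j) * hsNorm s) ≤ hsInner (F (x j)) (F s) := by
        intro j _
        linarith [(abs_le.1 (KFF (x j) s)).1]
      calc hsInner s s - 4 * ε * (T * hsNorm s)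
          = ∑ j, (hsInner (x j) s - 4 * ε * (hsNorm (x j) * hsNorm s)) := by
            rw [Finset.sum_sub_distrib]
            have e1 : ∑ j, hsInner (x j) s = hsInner s s := by
              rw [hs, hsInner_sum_left]
            have e2 : ∑ j, 4 * ε * (hsNorm (x j) * hsNorm s) = 4 * ε * (T * hsNorm s) := by
              simp only [← Finset.mul_sum, ← Finset.sum_mul]
              rw [hT]
            rw [e1, e2]
        _ ≤ ∑ j, hsInner (F (x j)) (F s) := Finset.sum_le_sum hstep
    have hb3 : hsInner (F s) (F s) ≤ hsInner s s + 4 * ε * (hsNorm s * hsNorm s) := by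
      linarith [(abs_le.1 (KFF s s)).2]
    have hkey : hsInner w w ≤ 16 * ε * T ^ 2 := by
      have q1 : T * hsNorm s ≤ T ^ 2 := by nlinarith [hsT, hT0]
      have q2 : hsNorm s * hsNorm s ≤ T ^ 2 := by nlinarith [hsT, hns0]
      have p1 : 4 * ε * (T * hsNorm s) ≤ 4 * ε * T ^ 2 :=
        mul_le_mul_of_nonneg_left q1 (by positivity)
      have p2 : 4 * ε * (hsNorm s * hsNorm s) ≤ 4 * ε * T ^ 2 :=
        mul_le_mul_of_nonneg_left q2 (by positivity)
      rw [hww]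
      linarith [hb1, hb2, hb3, p1, p2]
    have hfinal : hsNorm w ≤ 4 * Real.sqrt ε * T := by
      have h1 : hsNorm w ≤ Real.sqrt (16 * ε * T ^ 2) := hsNorm_le_sqrt hkey
      have h2 : Real.sqrt (16 * ε * T ^ 2) = 4 * Real.sqrt ε * T := by
        rw [show 16 * ε * T ^ 2 = (4 * Real.sqrt ε * T) ^ 2 by
          rw [mul_pow, mul_pow, Real.sq_sqrt hε.le]; ring]
        exact Real.sqrt_sq
          (mul_nonneg (mul_nonneg (by norm_num) (Real.sqrt_nonneg _)) hT0)
      rw [h2] at h1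
      exact h1
    exact hfinal
  · -- (4) f is close to F on the unit ball
    intro x hx
    have hx1 : hsNorm x ≤ 1 := hx
    have h0 : (0:ℝ) ≤ hsNorm x := hsNorm_nonneg x
    have hA := abs_le.1 (hsym x hx x hx)
    have hB := abs_le.1 (KFf x x hx)
    have hC := abs_le.1 (KFF x x)
    have hexp : hsInner (f x - F x) (f x - F x)
        = hsInner (f x) (f x) - 2 * hsInner (F x) (f x) + hsInner (F x) (F x) := by
      rw [hsInner_sub_left, hsInner_sub_right, hsInner_sub_right,
        hsInner_comm (f x) (F x)]
      ring
    have hsq : hsNorm x * hsNorm x ≤ 1 := by nlinarith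
    have p3 : 4 * ε * (hsNorm x * hsNorm x) ≤ 4 * ε :=
      (mul_le_of_le_one_right (by positivity) hsq)
    have p4 : 2 * ε * hsNorm x ≤ 2 * ε :=
      (mul_le_of_le_one_right (by positivity) hx1)
    have hkey : hsInner (f x - F x) (f x - F x) ≤ 9 * ε := by
      rw [hexp]
      linarith [hA.2, hB.1, hC.2, p3, p4, hε.le]
    have h1 : hsNorm (f x - F x) ≤ Real.sqrt (9 * ε) := hsNorm_le_sqrt hkey
    have h2 : Real.sqrt (9 * ε) = 3 * Real.sqrt ε := by
      rw [show 9 * ε = (3 * Real.sqrt ε) ^ 2 by rw [mul_pow, Real.sq_sqrt hε.le]; ring]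
      exact Real.sqrt_sq (by positivity)
    rw [h2] at h1
    exact h1
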